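/- For every state U = (ρ, m, E) ∈ 𝒢, every u* ∈ ℝ² and every z ∈ ℝ² with z ≠ 0, one has |φ(S₁(U); z, u*)| ≤ δ₁(U)·φ(U; z, u*) and |φ(S₂(U); z, u*)| ≤ δ₂(U)·φ(U; z, u*), where S₁(U) := (0, (ρ, 0), [[m₁, m₂/2],[m₂/2, 0]]), δ₁(U) := max{√(ρ/p₁₁), √(ρ p₂₂/det(p))}, S₂(U) := (0, (0, ρ), [[0, m₁/2],[m₁/2, m₂]]), and δ₂(U) := max{√(ρ/p₂₂), √(ρ p₁₁/det(p))}, with p = p(U). -/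

import Mathlib

open Matrix

noncomputable section

/-- A state is a triple `(ρ, m, E)` with `ρ : ℝ`, `m : ℝ²`, `E` a 2×2 real matrix. -/
abbrev Mat2 := Matrix (Fin 2) (Fin 2) ℝ

/-- The pressure tensor `p(U) = 2E - (1/ρ) m mᵀ`. -/
def pTensor (ρ : ℝ) (m : Fin 2 → ℝ) (E : Mat2) : Mat2 :=
  (2 : ℝ) • E - ρ⁻¹ • vecMulVec m m

/-- `φ(U; z, u*) = zᵀEz − (m·z)(u*·z) + (ρ/2)(u*·z)²`. -/
def phi (ρ : ℝ) (m : Fin 2 → ℝ) (E : Mat2) (z u : Fin 2 → ℝ) : ℝ :=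
  z ⬝ᵥ (E *ᵥ z) - (m ⬝ᵥ z) * (u ⬝ᵥ z) + (ρ / 2) * (u ⬝ᵥ z) ^ 2

/-- The admissible set `𝒢`: states with positive density and positive definite pressure tensor. -/
def G : Set (ℝ × (Fin 2 → ℝ) × Mat2) :=
  {U | 0 < U.1 ∧ (pTensor U.1 U.2.1 U.2.2).PosDef}

/-- The closed admissible set `𝒢̄`: states (so `E` symmetric) with `ρ ≥ 0` and
`φ(U; z, u*) ≥ 0` for all `z, u*`. -/
def Gbar : Set (ℝ × (Fin 2 → ℝ) × Mat2) :=
  {U | 0 ≤ U.1 ∧ U.2.2.IsSymm ∧ ∀ z u : Fin 2 → ℝ, 0 ≤ phi U.1 U.2.1 U.2.2 z u}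

private lemma key_scalar (ρ p00 p01 p11 z0 z1 w : ℝ) (hρ : 0 < ρ)
    (hp00 : 0 < p00) (hp11 : 0 < p11) (hd : 0 < p00 * p11 - p01 ^ 2) :
    |z0 * w| ≤ Real.sqrt (ρ * p11 / (p00 * p11 - p01 ^ 2)) *
      ((p00 * z0 ^ 2 + 2 * p01 * z0 * z1 + p11 * z1 ^ 2) / 2 + w ^ 2 / (2 * ρ)) := by
  set d := p00 * p11 - p01 ^ 2 with hdd
  set q := p00 * z0 ^ 2 + 2 * p01 * z0 * z1 + p11 * z1 ^ 2 with hq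
  set δ := Real.sqrt (ρ * p11 / d) with hδ
  have hargpos : 0 < ρ * p11 / d := by positivity
  have hδpos : 0 < δ := Real.sqrt_pos.mpr hargpos
  have hδ2 : δ ^ 2 = ρ * p11 / d := Real.sq_sqrt hargpos.le
  have hkey : ρ * z0 ^ 2 ≤ δ ^ 2 * q := by
    rw [hδ2, div_mul_eq_mul_div, le_div_iff₀ hd, hq, hdd]
    nlinarith [mul_nonneg hρ.le (sq_nonneg (p01 * z0 + p11 * z1))]
  have h2ρ : (0:ℝ) < 2 * ρ := by linarith
  rw [← mul_le_mul_iff_right₀ h2ρ]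
  have hr : 2 * ρ * (δ * (q / 2 + w ^ 2 / (2 * ρ))) = δ * (ρ * q) + δ * w ^ 2 := by
    field_simp
  rw [hr]
  have habs : |2 * ρ * (z0 * w)| = 2 * ρ * |z0 * w| := by
    rw [abs_mul, abs_of_pos h2ρ]
  rw [← habs, abs_le]
  have H1 : ρ * (ρ * z0 ^ 2) ≤ ρ * (δ ^ 2 * q) := by nlinarith
  constructor
  · nlinarith [sq_nonneg (ρ * z0 + δ * w), hδpos, H1]
  · nlinarith [sq_nonneg (ρ * z0 - δ * w), hδpos, H1]

/-- Corollary 2.1 of the paper: `|φ(Sᵢ(U); z, u*)| ≤ δᵢ(U) φ(U; z, u*)` for `U ∈ 𝒢`. -/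
theorem phi_source_bound (ρ : ℝ) (m : Fin 2 → ℝ) (E : Mat2) (hU : (ρ, m, E) ∈ G)
    (u z : Fin 2 → ℝ) (hz : z ≠ 0) :
    |phi 0 ![ρ, 0] !![m 0, m 1 / 2; m 1 / 2, 0] z u| ≤
      max (Real.sqrt (ρ / (pTensor ρ m E) 0 0))
          (Real.sqrt (ρ * (pTensor ρ m E) 1 1 / (pTensor ρ m E).det)) *
        phi ρ m E z u ∧
    |phi 0 ![0, ρ] !![0, m 0 / 2; m 0 / 2, m 1] z u| ≤
      max (Real.sqrt (ρ / (pTensor ρ m E) 1 1))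
          (Real.sqrt (ρ * (pTensor ρ m E) 0 0 / (pTensor ρ m E).det)) *
        phi ρ m E z u := by
  obtain ⟨hρ, hpd⟩ := hU
  simp only at hρ hpd
  set P := pTensor ρ m E with hPdef
  have hsym : P 1 0 = P 0 1 := by
    have := hpd.1.apply 0 1
    simpa using this
  have hP00 : P 0 0 = 2 * E 0 0 - ρ⁻¹ * (m 0 * m 0) := by
    simp [hPdef, pTensor, vecMulVec_apply]
  have hP01 : P 0 1 = 2 * E 0 1 - ρ⁻¹ * (m 0 * m 1) := by
    simp [hPdef, pTensor, vecMulVec_apply]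
  have hP10 : P 1 0 = 2 * E 1 0 - ρ⁻¹ * (m 1 * m 0) := by
    simp [hPdef, pTensor, vecMulVec_apply]
  have hP11 : P 1 1 = 2 * E 1 1 - ρ⁻¹ * (m 1 * m 1) := by
    simp [hPdef, pTensor, vecMulVec_apply]
  have hE : E 1 0 = E 0 1 := by
    have h := hsym
    rw [hP10, hP01] at h
    nlinarith [h]
  -- diagonal positivity
  have h00 : 0 < P 0 0 := by
    have := hpd.dotProduct_mulVec_pos (x := ![(1:ℝ), 0]) (by
      intro h; have := congrFun h 0; simp at this)
    simpa [dotProduct, mulVec, Fin.sum_univ_two] using this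
  have h11 : 0 < P 1 1 := by
    have := hpd.dotProduct_mulVec_pos (x := ![(0:ℝ), 1]) (by
      intro h; have := congrFun h 1; simp at this)
    simpa [dotProduct, mulVec, Fin.sum_univ_two] using this
  have hdetP : P.det = P 0 0 * P 1 1 - P 0 1 ^ 2 := by
    rw [Matrix.det_fin_two, hsym]; ring
  have hd : 0 < P 0 0 * P 1 1 - P 0 1 ^ 2 := by
    rw [← hdetP]; exact hpd.det_pos
  set w : ℝ := (m 0 * z 0 + m 1 * z 1) - ρ * (u 0 * z 0 + u 1 * z 1) with hw
  set q : ℝ := P 0 0 * z 0 ^ 2 + 2 * P 0 1 * z 0 * z 1 + P 1 1 * z 1 ^ 2 with hq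
  have hphi : phi ρ m E z u = q / 2 + w ^ 2 / (2 * ρ) := by
    simp only [phi, dotProduct, mulVec, Fin.sum_univ_two]
    rw [hq, hP00, hP01, hP11, hw]
    field_simp
    ring_nf
    rw [hE]
    ring
  have hphi1 : phi 0 ![ρ, 0] !![m 0, m 1 / 2; m 1 / 2, 0] z u = z 0 * w := by
    simp only [phi, dotProduct, mulVec, Fin.sum_univ_two, hw]
    simp [Matrix.cons_val_zero, Matrix.cons_val_one]
    ring
  have hphi2 : phi 0 ![0, ρ] !![0, m 0 / 2; m 0 / 2, m 1] z u = z 1 * w := by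
    simp only [phi, dotProduct, mulVec, Fin.sum_univ_two, hw]
    simp [Matrix.cons_val_zero, Matrix.cons_val_one]
    ring
  have hqnn : 0 ≤ q := by
    rw [hq]; nlinarith [sq_nonneg (P 0 0 * z 0 + P 0 1 * z 1), sq_nonneg (z 1)]
  have hφnn : 0 ≤ phi ρ m E z u := by
    rw [hphi]; positivity
  constructor
  · rw [hphi1, hdetP]
    have hb := key_scalar ρ (P 0 0) (P 0 1) (P 1 1) (z 0) (z 1) w hρ h00 h11 hd
    rw [← hq, ← hphi] at hb
    refine hb.trans (mul_le_mul_of_nonneg_right (le_max_right _ _) hφnn)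
  · rw [hphi2, hdetP]
    have hd' : 0 < P 1 1 * P 0 0 - P 0 1 ^ 2 := by
      rw [mul_comm (P 1 1) (P 0 0)]; exact hd
    have hb := key_scalar ρ (P 1 1) (P 0 1) (P 0 0) (z 1) (z 0) w hρ h11 h00 hd'
    have e1 : ρ * P 0 0 / (P 1 1 * P 0 0 - P 0 1 ^ 2)
        = ρ * P 0 0 / (P 0 0 * P 1 1 - P 0 1 ^ 2) := by
      rw [mul_comm (P 1 1) (P 0 0)]
    have e2 : P 1 1 * z 1 ^ 2 + 2 * P 0 1 * z 1 * z 0 + P 0 0 * z 0 ^ 2 = q := by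
      rw [hq]; ring
    rw [e1, e2, ← hphi] at hb
    refine hb.trans (mul_le_mul_of_nonneg_right (le_max_right _ _) hφnn)
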